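/- Let n, d be positive integers and let S be a subset of the unit sphere S^{n-1} ⊆ ℝⁿ. Let L be a linear functional on the space of homogeneous real polynomials of degree 2d in n variables such that L(p) ≥ 0 for every homogeneous polynomial p of degree 2d with p(y) ≥ 0 for all y ∈ S. Then there exist a finite set N contained in the closure of S in the sphere and a weight function w : N → (0,∞) such that L(p) = Σ_{y∈N} w(y)·p(y) for every homogeneous polynomial p of degree 2d. -/

import Mathlib

open MvPolynomial Finset Filter Topology

noncomputable section
set_option maxHeartbeats 1000000

/-- Euclidean norm on `Fin n → ℝ`. -/
def eNorm {n : ℕ} (x : Fin n → ℝ) : ℝ := Real.sqrt (∑ i, x i ^ 2)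

theorem aux_cone_closed {E : Type*} [NormedAddCommGroup E] [NormedSpace ℝ E] {K : Set E}
    (hK : IsCompact K) (g : E →L[ℝ] ℝ) (hg : ∀ x ∈ K, g x = 1) :
    IsClosed {z | ∃ t : ℝ, 0 ≤ t ∧ ∃ x ∈ K, z = t • x} := by
  apply IsSeqClosed.isClosed
  intro zs z hzs hlim
  choose t ht x hx hz using hzs
  obtain ⟨x₀, hx₀K, φ, hφ, hxlim⟩ := hK.tendsto_subseq hx
  have hgt : ∀ k, g (zs k) = t k := by
    intro k; rw [hz k, map_smul, hg _ (hx k)]; simp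
  have hgz : Tendsto (fun k => g (zs k)) atTop (𝓝 (g z)) :=
    (g.continuous.tendsto z).comp hlim
  have h1 : Tendsto (fun k => t (φ k)) atTop (𝓝 (g z)) := by
    have := hgz.comp hφ.tendsto_atTop
    simpa [Function.comp_def, hgt] using this
  have h2 : Tendsto (fun k => t (φ k) • x (φ k)) atTop (𝓝 (g z • x₀)) := h1.smul hxlim
  have h3 : Tendsto (fun k => zs (φ k)) atTop (𝓝 z) := hlim.comp hφ.tendsto_atTop
  have hz2 : z = g z • x₀ := by
    refine tendsto_nhds_unique ?_ h2
    simpa [fun k => hz (φ k)] using h3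
  exact ⟨g z, ge_of_tendsto' h1 fun k => ht (φ k), x₀, hx₀K, hz2⟩

theorem aux_isCompact_convexHull {E : Type*} [NormedAddCommGroup E] [NormedSpace ℝ E]
    [FiniteDimensional ℝ E] {s : Set E} (hs : IsCompact s) : IsCompact (convexHull ℝ s) := by
  classical
  rcases s.eq_empty_or_nonempty with rfl | ⟨a₀, ha₀⟩
  · simpa [convexHull_empty] using isCompact_empty
  set m := Module.finrank ℝ E with hm
  set D : Set ((Fin (m+1) → ℝ) × (Fin (m+1) → E)) :=
    (stdSimplex ℝ (Fin (m+1))) ×ˢ (Set.univ.pi fun _ => s) with hD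
  have hDc : IsCompact D := (isCompact_stdSimplex (𝕜 := ℝ) (ι := Fin (m+1))).prod (isCompact_univ_pi fun _ => hs)
  set f : ((Fin (m+1) → ℝ) × (Fin (m+1) → E)) → E := fun p => ∑ i, p.1 i • p.2 i with hf
  have hfc : Continuous f := by
    apply continuous_finset_sum
    intro i _
    exact ((continuous_apply i).comp continuous_fst).smul ((continuous_apply i).comp continuous_snd)
  have himage : convexHull ℝ s = f '' D := by
    apply Set.Subset.antisymm
    · intro v hv
      obtain ⟨ι, hι, z, w, hzs, hind, hwpos, hwsum, hx⟩ := eq_pos_convex_span_of_mem_convexHull hv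
      have hcard : Fintype.card ι ≤ m + 1 := by
        rcases isEmpty_or_nonempty ι with h | h
        · simp [Fintype.card_eq_zero]
        · have h1 := hind.finrank_vectorSpan_add_one
          rw [← h1]
          have : Module.finrank ℝ (vectorSpan ℝ (Set.range z)) ≤ m := Submodule.finrank_le _
          omega
      set r := Fintype.card ι with hr
      have hrm : r ≤ m + 1 := hcard
      let e := Fintype.equivFin ι
      set F : ℕ → ℝ := fun k => if h : k < r then w (e.symm ⟨k, h⟩) else 0 with hF
      set Z : ℕ → E := fun k => if h : k < r then z (e.symm ⟨k, h⟩) else a₀ with hZ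
      refine ⟨(fun i => F i, fun i => Z i), ⟨?_, ?_⟩, ?_⟩
      · constructor
        · intro i
          by_cases h : (i : ℕ) < r
          · simp only [F, dif_pos h]; exact (hwpos _).le
          · simp [F, dif_neg h]
        · have e1 : ∑ i : Fin (m+1), F i = ∑ k ∈ range (m+1), F k :=
            Fin.sum_univ_eq_sum_range F (m+1)
          have e2 : ∑ k ∈ range (m+1), F k = ∑ k ∈ range r, F k := by
            refine (Finset.sum_subset (Finset.range_subset_range.2 hrm) ?_).symm
            intro k _ hk
            rw [Finset.mem_range, not_lt] at hk
            simp [F, dif_neg (not_lt.2 hk)]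
          have e3 : ∑ k ∈ range r, F k = ∑ i : Fin r, F i :=
            (Fin.sum_univ_eq_sum_range F r).symm
          have e4 : ∑ i : Fin r, F i = ∑ j : ι, w j := by
            rw [← e.symm.sum_comp w]
            apply Finset.sum_congr rfl
            intro i _
            simp [F, i.isLt]
          show ∑ i : Fin (m+1), F i = 1
          rw [e1, e2, e3, e4, hwsum]
      · intro i _
        by_cases h : (i : ℕ) < r
        · simp only [Z, dif_pos h]; exact hzs (Set.mem_range_self _)
        · simpa [Z, dif_neg h] using ha₀
      · show ∑ i : Fin (m+1), F i • Z i = v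
        set G : ℕ → E := fun k => F k • Z k with hG
        have e1 : ∑ i : Fin (m+1), F i • Z i = ∑ k ∈ range (m+1), G k :=
          Fin.sum_univ_eq_sum_range G (m+1)
        have e2 : ∑ k ∈ range (m+1), G k = ∑ k ∈ range r, G k := by
          refine (Finset.sum_subset (Finset.range_subset_range.2 hrm) ?_).symm
          intro k _ hk
          rw [Finset.mem_range, not_lt] at hk
          simp [G, F, dif_neg (not_lt.2 hk)]
        have e3 : ∑ k ∈ range r, G k = ∑ i : Fin r, G i :=
          (Fin.sum_univ_eq_sum_range G r).symm
        have e4 : ∑ i : Fin r, G i = ∑ j : ι, w j • z j := by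
          rw [← e.symm.sum_comp fun j => w j • z j]
          apply Finset.sum_congr rfl
          intro i _
          simp [G, F, Z, i.isLt]
        rw [e1, e2, e3, e4, hx]
    · rintro v ⟨⟨w, z⟩, ⟨hw, hz⟩, rfl⟩
      refine (convex_convexHull ℝ s).sum_mem (fun i _ => hw.1 i) hw.2 ?_
      intro i _
      exact subset_convexHull ℝ s (hz i (Set.mem_univ i))
  rw [himage]
  exact hDc.image hfc

/-- Lemma `exhqr`: every linear functional on the space of homogeneous forms of degree `2d`
that is nonnegative on all forms nonnegative on `S ⊆ S^{n-1}` is given by a quadrature rule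
with positive weights and all nodes in the closure of `S`. -/
theorem stmt_0 (n d : ℕ) (hn : 0 < n) (hd : 0 < d)
    (S : Set (Fin n → ℝ)) (hS : ∀ y ∈ S, eNorm y = 1)
    (L : Module.Dual ℝ (MvPolynomial.homogeneousSubmodule (Fin n) ℝ (2 * d)))
    (hL : ∀ p : MvPolynomial.homogeneousSubmodule (Fin n) ℝ (2 * d),
      (∀ y ∈ S, 0 ≤ eval y (p : MvPolynomial (Fin n) ℝ)) → 0 ≤ L p) :
    ∃ (N : Finset (Fin n → ℝ)) (w : (Fin n → ℝ) → ℝ),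
      (↑N : Set (Fin n → ℝ)) ⊆ closure S ∧ (∀ y ∈ N, 0 < w y) ∧
      ∀ p : MvPolynomial.homogeneousSubmodule (Fin n) ℝ (2 * d),
        L p = ∑ y ∈ N, w y * eval y (p : MvPolynomial (Fin n) ℝ) := by
  classical
  haveI hfd : FiniteDimensional ℝ (homogeneousSubmodule (Fin n) ℝ (2*d)) := by
    have hle : homogeneousSubmodule (Fin n) ℝ (2*d) ≤ restrictTotalDegree (Fin n) ℝ (2*d) := by
      intro p hp
      rw [mem_restrictTotalDegree]
      exact ((mem_homogeneousSubmodule _ _).mp hp).totalDegree_le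
    exact Submodule.finiteDimensional_of_le hle
  haveI hfree : Module.Free ℝ (homogeneousSubmodule (Fin n) ℝ (2*d)) :=
    Module.Free.of_divisionRing _ _
  -- trivial case : S empty
  rcases S.eq_empty_or_nonempty with rfl | hSne
  · refine ⟨∅, fun _ => 1, by simp, by simp, ?_⟩
    intro p
    have h1 : 0 ≤ L p := hL p (by simp)
    have h2 : 0 ≤ L (-p) := hL (-p) (by simp)
    rw [map_neg] at h2
    simp only [Finset.sum_empty]
    linarith
  -- setup
  set T : Set (Fin n → ℝ) := closure S with hT
  have hSsum : ∀ y ∈ S, ∑ i, y i ^ 2 = 1 := by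
    intro y hy
    exact Real.sqrt_eq_one.mp (hS y hy)
  have hT1 : ∀ y ∈ T, ∑ i, y i ^ 2 = 1 := by
    have hcl : IsClosed {y : Fin n → ℝ | ∑ i, y i ^ 2 = 1} :=
      isClosed_eq (continuous_finset_sum _ fun i _ => (continuous_apply i).pow 2) continuous_const
    exact fun y hy => closure_minimal hSsum hcl hy
  have hTc : IsCompact T := by
    have hsub : S ⊆ Metric.closedBall 0 1 := by
      intro y hy
      rw [Metric.mem_closedBall, dist_zero_right, pi_norm_le_iff_of_nonneg zero_le_one]
      intro i
      rw [Real.norm_eq_abs]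
      have h2 : y i ^ 2 ≤ 1 := by
        rw [← hSsum y hy]
        exact Finset.single_le_sum (fun j _ => sq_nonneg (y j)) (Finset.mem_univ i)
      nlinarith [abs_nonneg (y i), sq_abs (y i)]
    exact (isCompact_closedBall (0 : Fin n → ℝ) 1).of_isClosed_subset isClosed_closure
      (closure_minimal hsub Metric.isClosed_closedBall)
  set m := Module.finrank ℝ (homogeneousSubmodule (Fin n) ℝ (2*d)) with hm
  set B := Module.finBasis ℝ (homogeneousSubmodule (Fin n) ℝ (2*d)) with hB
  set u : (Fin n → ℝ) → (Fin m → ℝ) :=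
    fun y i => eval y ((B i : MvPolynomial (Fin n) ℝ)) with hu
  have huc : Continuous u :=
    continuous_pi fun i => MvPolynomial.continuous_eval _
  have evalsum : ∀ (c : Fin m → ℝ) (y : Fin n → ℝ),
      eval y ((∑ i, c i • B i : homogeneousSubmodule (Fin n) ℝ (2*d)) : MvPolynomial (Fin n) ℝ)
        = ∑ i, c i * u y i := by
    intro c y
    rw [Submodule.coe_sum, map_sum]
    apply Finset.sum_congr rfl
    intro i _
    rw [Submodule.coe_smul, smul_eq_C_mul, map_mul, eval_C]
  -- the polynomial q
  have hqhom : ((∑ i, X i ^ 2 : MvPolynomial (Fin n) ℝ) ^ d).IsHomogeneous (2 * d) := by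
    apply MvPolynomial.IsHomogeneous.pow
    apply MvPolynomial.IsHomogeneous.sum
    intro i _
    simpa using (isHomogeneous_X ℝ i).pow 2
  set q : homogeneousSubmodule (Fin n) ℝ (2*d) :=
    ⟨(∑ i, X i ^ 2 : MvPolynomial (Fin n) ℝ) ^ d, (mem_homogeneousSubmodule _ _).mpr hqhom⟩
    with hq
  have hq1 : ∀ y ∈ T, eval y ((q : MvPolynomial (Fin n) ℝ)) = 1 := by
    intro y hy
    show eval y ((∑ i, X i ^ 2 : MvPolynomial (Fin n) ℝ) ^ d) = 1
    rw [map_pow, map_sum]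
    simp only [map_pow, eval_X]
    rw [hT1 y hy, one_pow]
  -- the functional g
  set glin : (Fin m → ℝ) →ₗ[ℝ] ℝ :=
    { toFun := fun c => ∑ i, B.repr q i * c i
      map_add' := by
        intro a b
        simp [mul_add, Finset.sum_add_distrib]
      map_smul' := by
        intro r a
        simp only [Pi.smul_apply, smul_eq_mul, RingHom.id_apply]
        rw [Finset.mul_sum]
        apply Finset.sum_congr rfl
        intros; ring } with hglin
  set g : (Fin m → ℝ) →L[ℝ] ℝ := LinearMap.toContinuousLinearMap glin with hg
  have hgu : ∀ y ∈ T, g (u y) = 1 := by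
    intro y hy
    show ∑ i, B.repr q i * u y i = 1
    rw [← evalsum (fun i => B.repr q i) y]
    have : (∑ i, B.repr q i • B i : homogeneousSubmodule (Fin n) ℝ (2*d)) = q := B.sum_repr q
    rw [this]
    exact hq1 y hy
  -- the cone
  set A : Set (Fin m → ℝ) := u '' T with hA
  have hAc : IsCompact A := hTc.image huc
  set K : Set (Fin m → ℝ) := convexHull ℝ A with hK
  have hKc : IsCompact K := aux_isCompact_convexHull hAc
  have hgK : ∀ x ∈ K, g x = 1 := by
    have hconv : Convex ℝ {x : Fin m → ℝ | g x = 1} := by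
      intro x hx y hy a b ha hb hab
      simp only [Set.mem_setOf_eq, map_add, map_smul, smul_eq_mul] at *
      rw [hx, hy]; linarith
    have : A ⊆ {x | g x = 1} := by
      rintro x ⟨y, hy, rfl⟩
      exact hgu y hy
    exact fun x hx => convexHull_min this hconv hx
  set C : Set (Fin m → ℝ) := {z | ∃ t : ℝ, 0 ≤ t ∧ ∃ x ∈ K, z = t • x} with hC
  have hCclosed : IsClosed C := aux_cone_closed hKc g hgK
  have hKne : K.Nonempty := by
    obtain ⟨y0, hy0⟩ := hSne
    exact ⟨u y0, subset_convexHull ℝ A ⟨y0, subset_closure hy0, rfl⟩⟩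
  obtain ⟨x₀, hx₀⟩ := hKne
  have hCconv : Convex ℝ C := by
    rintro z₁ ⟨t₁, ht₁, x₁, hx₁, rfl⟩ z₂ ⟨t₂, ht₂, x₂, hx₂, rfl⟩ a b ha hb hab
    by_cases h : a * t₁ + b * t₂ = 0
    · refine ⟨0, le_refl 0, x₁, hx₁, ?_⟩
      have e1 : a * t₁ = 0 := by nlinarith [mul_nonneg ha ht₁, mul_nonneg hb ht₂]
      have e2 : b * t₂ = 0 := by nlinarith [mul_nonneg ha ht₁, mul_nonneg hb ht₂]
      rw [smul_smul, smul_smul, e1, e2]; simp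
    · have hpos : 0 < a * t₁ + b * t₂ :=
        lt_of_le_of_ne (by positivity) (Ne.symm h)
      refine ⟨a*t₁ + b*t₂, hpos.le,
        (a*t₁/(a*t₁+b*t₂)) • x₁ + (b*t₂/(a*t₁+b*t₂)) • x₂, ?_, ?_⟩
      · exact (convex_convexHull ℝ A) hx₁ hx₂ (by positivity) (by positivity) (by field_simp)
      · rw [smul_add, smul_smul, smul_smul, smul_smul, smul_smul]
        congr 1 <;> · congr 1; field_simp
  have hzeroC : (0 : Fin m → ℝ) ∈ C := ⟨0, le_refl 0, x₀, hx₀, by simp⟩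
  -- the vector ℓ
  set ℓ : Fin m → ℝ := fun i => L (B i) with hℓ
  have hLp : ∀ p : homogeneousSubmodule (Fin n) ℝ (2*d), L p = ∑ i, B.repr p i * ℓ i := by
    intro p
    conv_lhs => rw [← B.sum_repr p]
    rw [map_sum]
    apply Finset.sum_congr rfl
    intro i _
    rw [map_smul, smul_eq_mul]
  have hevalp : ∀ (p : homogeneousSubmodule (Fin n) ℝ (2*d)) (y : Fin n → ℝ),
      eval y ((p : MvPolynomial (Fin n) ℝ)) = ∑ i, B.repr p i * u y i := by
    intro p y
    rw [← evalsum (fun i => B.repr p i) y, B.sum_repr p]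
  have hfex : ∀ (f : (Fin m → ℝ) →L[ℝ] ℝ) (x : Fin m → ℝ),
      f x = ∑ i, x i * f (Pi.single i 1) := by
    intro f x
    conv_lhs => rw [← Finset.univ_sum_single x]
    rw [map_sum]
    apply Finset.sum_congr rfl
    intro i _
    have h : Pi.single i (x i) = x i • (Pi.single i (1:ℝ) : Fin m → ℝ) := by
      ext j; by_cases h : j = i <;> simp [Pi.single_apply, h]
    rw [h, map_smul, smul_eq_mul]
  -- ℓ ∈ C
  have hmem : ℓ ∈ C := by
    by_contra hnot
    obtain ⟨f, u', hfC, hfℓ⟩ := geometric_hahn_banach_closed_point hCconv hCclosed hnot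
    have hu'pos : 0 < u' := by
      have := hfC 0 hzeroC
      simpa using this
    have hfneg : ∀ y ∈ T, f (u y) ≤ 0 := by
      intro y hy
      by_contra hpos
      push_neg at hpos
      have hmem2 : ((u' + 1) / f (u y)) • u y ∈ C :=
        ⟨(u' + 1) / f (u y), by positivity, u y,
          subset_convexHull ℝ A ⟨y, hy, rfl⟩, rfl⟩
      have := hfC _ hmem2
      rw [map_smul, smul_eq_mul] at this
      rw [div_mul_cancel₀] at this
      · linarith
      · exact ne_of_gt hpos
    set p : homogeneousSubmodule (Fin n) ℝ (2*d) :=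
      ∑ i, f (Pi.single i 1) • B i with hp
    have hevalP : ∀ y : Fin n → ℝ, eval y ((p : MvPolynomial (Fin n) ℝ)) = f (u y) := by
      intro y
      rw [hp, evalsum, hfex f (u y)]
      apply Finset.sum_congr rfl
      intros; ring
    have hLneg : 0 ≤ L (-p) := by
      apply hL
      intro y hy
      have h1 : eval y ((p : MvPolynomial (Fin n) ℝ)) ≤ 0 := by
        rw [hevalP]; exact hfneg y (subset_closure hy)
      rw [Submodule.coe_neg, map_neg]
      linarith
    rw [map_neg] at hLneg
    have hLP : L p = f ℓ := by
      rw [hp, map_sum, hfex f ℓ]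
      apply Finset.sum_congr rfl
      intro i _
      rw [map_smul, smul_eq_mul]
      ring
    have : 0 < L p := by rw [hLP]; linarith
    linarith
  -- extract the representation
  obtain ⟨t, ht0, x, hxK, hℓeq⟩ := hmem
  rcases eq_or_lt_of_le ht0 with htz | htpos
  · -- t = 0 : ℓ = 0, L = 0
    have hℓ0 : ℓ = 0 := by rw [hℓeq, ← htz]; simp
    refine ⟨∅, fun _ => 1, by simp, by simp, ?_⟩
    intro p
    rw [hLp p, Finset.sum_empty]
    simp [hℓ0]
  · obtain ⟨ι, hι, z, wt, hzA, hind, hwpos, hwsum, hxe⟩ :=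
      eq_pos_convex_span_of_mem_convexHull hxK
    have hzT : ∀ j : ι, ∃ y ∈ T, u y = z j := fun j => hzA (Set.mem_range_self j)
    choose y hyT hyz using hzT
    set N : Finset (Fin n → ℝ) := Finset.image y Finset.univ with hN
    set w : (Fin n → ℝ) → ℝ :=
      fun v => ∑ j ∈ Finset.univ.filter (fun j => y j = v), t * wt j with hw
    have hNsub : (↑N : Set (Fin n → ℝ)) ⊆ closure S := by
      intro v hv
      rw [hN] at hv
      simp only [Finset.coe_image, Set.mem_image, Finset.mem_coe] at hv
      obtain ⟨j, _, rfl⟩ := hv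
      exact hyT j
    have hwpos' : ∀ v ∈ N, 0 < w v := by
      intro v hv
      rw [hN, Finset.mem_image] at hv
      obtain ⟨j, _, rfl⟩ := hv
      apply Finset.sum_pos
      · intro k _
        exact mul_pos htpos (hwpos k)
      · exact ⟨j, by simp⟩
    have hvec : ∀ i, ℓ i = ∑ v ∈ N, w v * u v i := by
      intro i
      have h1 : ℓ i = ∑ j : ι, t * wt j * u (y j) i := by
        rw [hℓeq]
        rw [← hxe]
        simp only [Pi.smul_apply, smul_eq_mul]
        rw [Finset.sum_apply, Finset.mul_sum]
        apply Finset.sum_congr rfl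
        intro j _
        rw [hyz j]
        simp only [Pi.smul_apply, smul_eq_mul]
        ring
      have h2 : ∑ v ∈ N, w v * u v i = ∑ j : ι, t * wt j * u (y j) i := by
        rw [← Finset.sum_fiberwise_of_maps_to
          (fun j _ => Finset.mem_image_of_mem y (Finset.mem_univ j))
          (fun j => t * wt j * u (y j) i)]
        apply Finset.sum_congr rfl
        intro v _
        rw [hw, Finset.sum_mul]
        apply Finset.sum_congr rfl
        intro j hj
        rw [Finset.mem_filter] at hj
        rw [← hj.2]
      rw [h1, h2]
    refine ⟨N, w, hNsub, hwpos', ?_⟩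
    intro p
    calc L p = ∑ i, B.repr p i * ℓ i := hLp p
      _ = ∑ i, ∑ v ∈ N, B.repr p i * (w v * u v i) := by
          apply Finset.sum_congr rfl
          intro i _
          rw [hvec i, Finset.mul_sum]
      _ = ∑ v ∈ N, ∑ i, B.repr p i * (w v * u v i) := Finset.sum_comm
      _ = ∑ v ∈ N, w v * ∑ i, B.repr p i * u v i := by
          apply Finset.sum_congr rfl
          intro v _
          rw [Finset.mul_sum]
          apply Finset.sum_congr rfl
          intros; ring
      _ = ∑ v ∈ N, w v * eval v ((p : MvPolynomial (Fin n) ℝ)) := by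
          apply Finset.sum_congr rfl
          intro v _
          rw [hevalp p v]

end
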